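/- For every positive integer t there exists a constant C_t such that for every positive integer n, every t-laminar family of subsets of [n] has at most C_t·n^t members. -/

import Mathlib

open Finset

namespace TLamAux

variable {n t : ℕ}

/-- injective encoding of finsets into ℕ, used to pick canonical minima -/
noncomputable def enc : Finset (Fin n) → ℕ := Encodable.encode

lemma enc_inj : Function.Injective (enc (n := n)) := Encodable.encode_injective

/-- canonical subset of cardinality `k` -/
noncomputable def csub (k : ℕ) (X : Finset (Fin n)) : Finset (Fin n) :=
  if h : k ≤ X.card then (Finset.exists_subset_card_eq h).choose else ∅

lemma csub_subset {k : ℕ} {X : Finset (Fin n)} (h : k ≤ X.card) : csub k X ⊆ X := by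
  rw [csub, dif_pos h]
  exact (Finset.exists_subset_card_eq h).choose_spec.1

lemma csub_card {k : ℕ} {X : Finset (Fin n)} (h : k ≤ X.card) : (csub k X).card = k := by
  rw [csub, dif_pos h]
  exact (Finset.exists_subset_card_eq h).choose_spec.2

/-- element of `S` with minimal value of `f`, chosen canonically -/
noncomputable def minBy (f : Finset (Fin n) → ℕ) (S : Finset (Finset (Fin n))) :
    Finset (Fin n) :=
  if h : S.Nonempty then (S.exists_min_image f h).choose else ∅

lemma minBy_mem {f : Finset (Fin n) → ℕ} {S : Finset (Finset (Fin n))} (h : S.Nonempty) :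
    minBy f S ∈ S := by
  rw [minBy, dif_pos h]
  exact (S.exists_min_image f h).choose_spec.1

lemma minBy_le {f : Finset (Fin n) → ℕ} {S : Finset (Finset (Fin n))} {x : Finset (Fin n)}
    (hx : x ∈ S) : f (minBy f S) ≤ f x := by
  have h : S.Nonempty := ⟨x, hx⟩
  rw [minBy, dif_pos h]
  exact (S.exists_min_image f h).choose_spec.2 x hx

variable (G : Finset (Finset (Fin n)))

/-- the leaves: minimal members of `G` -/
noncomputable def Lv : Finset (Finset (Fin n)) := G.filter (fun L => ∀ B ∈ G, ¬ B ⊂ L)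

/-- the leaves contained in `X` -/
noncomputable def LvIn (X : Finset (Fin n)) : Finset (Finset (Fin n)) :=
  (Lv G).filter (· ⊆ X)

/-- the canonical minimal leaf inside `X` -/
noncomputable def lmin (X : Finset (Fin n)) : Finset (Fin n) := minBy enc (LvIn G X)

/-- proper `G`-subsets of `A` -/
noncomputable def PG (A : Finset (Fin n)) : Finset (Finset (Fin n)) := G.filter (· ⊂ A)

/-- the children of `A`: maximal proper `G`-subsets -/
noncomputable def Ch (A : Finset (Fin n)) : Finset (Finset (Fin n)) :=
  (PG G A).filter (fun B => ∀ C ∈ PG G A, ¬ B ⊂ C)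

/-- the child with smallest leaf -/
noncomputable def c1 (A : Finset (Fin n)) : Finset (Fin n) :=
  minBy (fun D => enc (lmin G D)) (Ch G A)

/-- the child with second smallest leaf -/
noncomputable def c2 (A : Finset (Fin n)) : Finset (Fin n) :=
  minBy (fun D => enc (lmin G D)) ((Ch G A).erase (c1 G A))

/-- `A` is a "path node": it has a maximum proper `G`-subset -/
def PathP (A : Finset (Fin n)) : Prop :=
  ∃ B, B ∈ G ∧ B ⊂ A ∧ ∀ C ∈ G, C ⊂ A → C ⊆ B

open Classical in
noncomputable def pmax (A : Finset (Fin n)) : Finset (Fin n) :=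
  if h : PathP G A then h.choose else ∅

lemma pmax_spec {A : Finset (Fin n)} (h : PathP G A) :
    pmax G A ∈ G ∧ pmax G A ⊂ A ∧ ∀ C ∈ G, C ⊂ A → C ⊆ pmax G A := by
  rw [pmax, dif_pos h]
  exact h.choose_spec

/-- the invariant of a path node -/
noncomputable def phiPath (k : ℕ) (A : Finset (Fin n)) : Finset (Fin n) :=
  if h : (A \ pmax G A).Nonempty then
    insert ((A \ pmax G A).min' h) (csub k (pmax G A)) else ∅

end TLamAux

open TLamAux

/-- For every positive integer `t` there is a constant `C` such that every `t`-laminar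
family of subsets of `[n]` has at most `C·n^t` members. -/
theorem tLaminar_card_le (t : ℕ) (ht : 0 < t) :
    ∃ C : ℕ, ∀ n : ℕ, 0 < n → ∀ F : Finset (Finset (Fin n)),
      (∀ A ∈ F, ∀ B ∈ F, t ≤ (A ∩ B).card → A ⊆ B ∨ B ⊆ A) →
      F.card ≤ C * n ^ t := by
  classical
  refine ⟨4 * (t + 1), fun n hn F lam => ?_⟩
  -- the big sets
  set G : Finset (Finset (Fin n)) := F.filter (fun A => t ≤ A.card) with hGdef
  have hGF : G ⊆ F := filter_subset _ _
  have hGcard : ∀ A ∈ G, t ≤ A.card := fun A hA => (mem_filter.mp hA).2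
  -- nesting from a common subset of size ≥ t
  have nest : ∀ A ∈ G, ∀ B ∈ G, ∀ S : Finset (Fin n),
      S ⊆ A → S ⊆ B → t ≤ S.card → A ⊆ B ∨ B ⊆ A := by
    intro A hA B hB S hSA hSB hS
    exact lam A (hGF hA) B (hGF hB)
      (le_trans hS (card_le_card (subset_inter hSA hSB)))
  -- leaves basics
  have lv_mem_G : ∀ L ∈ Lv G, L ∈ G := fun L hL => (mem_filter.mp hL).1
  have lv_min : ∀ L ∈ Lv G, ∀ B ∈ G, ¬ B ⊂ L := fun L hL => (mem_filter.mp hL).2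
  have leaf_eq : ∀ L1 ∈ Lv G, ∀ L2 ∈ Lv G, csub t L1 = csub t L2 → L1 = L2 := by
    intro L1 h1 L2 h2 hcs
    have hc1 : t ≤ L1.card := hGcard _ (lv_mem_G _ h1)
    have hc2 : t ≤ L2.card := hGcard _ (lv_mem_G _ h2)
    have hsub : csub t L1 ⊆ L2 := hcs ▸ csub_subset hc2
    have := nest L1 (lv_mem_G _ h1) L2 (lv_mem_G _ h2) (csub t L1)
      (csub_subset hc1) hsub (le_of_eq (csub_card hc1).symm)
    rcases this with h | h
    · rcases eq_or_ne L1 L2 with he | hne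
      · exact he
      · exact absurd (ssubset_of_ne_of_subset hne h) (lv_min _ h2 _ (lv_mem_G _ h1))
    · rcases eq_or_ne L2 L1 with he | hne
      · exact he.symm
      · exact absurd (ssubset_of_ne_of_subset hne h) (lv_min _ h1 _ (lv_mem_G _ h2))
  -- every member of G contains a leaf
  have lvin_ne : ∀ X ∈ G, (LvIn G X).Nonempty := by
    intro X hX
    have hne : (G.filter (· ⊆ X)).Nonempty := ⟨X, mem_filter.mpr ⟨hX, Subset.rfl⟩⟩
    obtain ⟨m, hm, hmin⟩ : ∃ m ∈ G.filter (· ⊆ X), ∀ x ∈ G.filter (· ⊆ X), ¬ x < m := by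
      obtain ⟨m, hm⟩ := Finset.exists_minimal hne
      exact ⟨m, hm.1, fun x hx hlt => (minimal_iff_forall_lt.1 hm).2 hlt hx⟩
    obtain ⟨hmG, hmX⟩ := mem_filter.mp hm
    refine ⟨m, mem_filter.mpr ⟨mem_filter.mpr ⟨hmG, ?_⟩, hmX⟩⟩
    intro B hB hBm
    exact hmin B (mem_filter.mpr ⟨hB, hBm.subset.trans hmX⟩) hBm
  have lmin_lv : ∀ X ∈ G, lmin G X ∈ Lv G :=
    fun X hX => (mem_filter.mp (minBy_mem (lvin_ne X hX))).1
  have lmin_sub : ∀ X ∈ G, lmin G X ⊆ X :=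
    fun X hX => (mem_filter.mp (minBy_mem (lvin_ne X hX))).2
  have lmin_le : ∀ X L, L ∈ Lv G → L ⊆ X → enc (lmin G X) ≤ enc L :=
    fun X L hL hLX => minBy_le (mem_filter.mpr ⟨hL, hLX⟩)
  -- children basics
  have ch_mem : ∀ A, ∀ D ∈ Ch G A, D ∈ G ∧ D ⊂ A :=
    fun A D hD => mem_filter.mp (mem_filter.mp hD).1
  have ch_max : ∀ A, ∀ D ∈ Ch G A, ∀ C ∈ PG G A, ¬ D ⊂ C :=
    fun A D hD => (mem_filter.mp hD).2
  have ch_cover : ∀ A, ∀ B ∈ PG G A, ∃ D ∈ Ch G A, B ⊆ D := by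
    intro A B hB
    have hne : ((PG G A).filter (B ⊆ ·)).Nonempty :=
      ⟨B, mem_filter.mpr ⟨hB, Subset.rfl⟩⟩
    obtain ⟨D, hD, hmax⟩ : ∃ D ∈ (PG G A).filter (B ⊆ ·), ∀ x ∈ (PG G A).filter (B ⊆ ·), ¬ D < x := by
      obtain ⟨m, hm⟩ := Finset.exists_maximal hne
      exact ⟨m, hm.1, fun x hx hlt => (maximal_iff_forall_gt.1 hm).2 hlt hx⟩
    obtain ⟨hDP, hBD⟩ := mem_filter.mp hD
    refine ⟨D, mem_filter.mpr ⟨hDP, fun C hC hDC => ?_⟩, hBD⟩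
    exact hmax C (mem_filter.mpr ⟨hC, hBD.trans hDC.subset⟩) hDC
  -- distinct children have no common leaf
  have ch_nocommon : ∀ A, ∀ D1 ∈ Ch G A, ∀ D2 ∈ Ch G A, D1 ≠ D2 →
      ∀ L ∈ G, L ⊆ D1 → L ⊆ D2 → False := by
    intro A D1 hD1 D2 hD2 hne L hL hL1 hL2
    have h1 := ch_mem A D1 hD1
    have h2 := ch_mem A D2 hD2
    rcases nest D1 h1.1 D2 h2.1 L hL1 hL2 (hGcard L hL) with h | h
    · exact ch_max A D1 hD1 D2 (mem_filter.mpr ⟨h2.1, h2.2⟩)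
        (ssubset_of_ne_of_subset hne h)
    · exact ch_max A D2 hD2 D1 (mem_filter.mpr ⟨h1.1, h1.2⟩)
        (ssubset_of_ne_of_subset hne.symm h)
  -- classify G into leaves, path nodes, branch nodes
  have lam' := lam
  -- the target set of small subsets
  set T : Finset (Finset (Fin n)) :=
    (Finset.range (t + 1)).biUnion
      (fun i => Finset.powersetCard i (Finset.univ : Finset (Fin n))) with hT
  have memT : ∀ S : Finset (Fin n), S.card ≤ t → S ∈ T := by
    intro S hS
    refine mem_biUnion.mpr ⟨S.card, mem_range.mpr (Nat.lt_succ_of_le hS), ?_⟩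
    exact Finset.mem_powersetCard.mpr ⟨subset_univ S, rfl⟩
  have cardT : T.card ≤ (t + 1) * n ^ t := by
    calc T.card ≤ ∑ i ∈ Finset.range (t + 1),
        (Finset.powersetCard i (Finset.univ : Finset (Fin n))).card :=
          card_biUnion_le
      _ ≤ ∑ i ∈ Finset.range (t + 1), n ^ t := by
          refine Finset.sum_le_sum fun i hi => ?_
          rw [Finset.card_powersetCard, card_univ, Fintype.card_fin]
          calc n.choose i ≤ n ^ i := Nat.choose_le_pow n i
            _ ≤ n ^ t := Nat.pow_le_pow_right hn (Nat.le_of_lt_succ (mem_range.mp hi))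
      _ = (t + 1) * n ^ t := by rw [Finset.sum_const, card_range, smul_eq_mul]
  -- leaf class bound
  have leafBound : (Lv G).card ≤ T.card := by
    refine card_le_card_of_injOn (fun A => csub t A) (fun A hA => ?_) ?_
    · exact memT _ (le_of_eq (csub_card (hGcard A (lv_mem_G A hA))))
    · intro A1 h1 A2 h2 he
      exact leaf_eq A1 h1 A2 h2 he
  -- path class facts
  set pathCl : Finset (Finset (Fin n)) :=
    G.filter (fun A => (¬ ∀ B ∈ G, ¬ B ⊂ A) ∧ PathP G A) with hpathCl
  have pmax_basic : ∀ A ∈ pathCl,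
      pmax G A ∈ G ∧ pmax G A ⊂ A ∧ (∀ C ∈ G, C ⊂ A → C ⊆ pmax G A) ∧
        (A \ pmax G A).Nonempty := by
    intro A hA
    obtain ⟨hAG, -, hP⟩ := mem_filter.mp hA
    obtain ⟨h1, h2, h3⟩ := pmax_spec G hP
    exact ⟨h1, h2, h3, sdiff_nonempty.mpr h2.not_subset⟩
  have phiPath_eq : ∀ A ∈ pathCl, ∀ h : (A \ pmax G A).Nonempty,
      phiPath G (t - 1) A = insert ((A \ pmax G A).min' h) (csub (t - 1) (pmax G A)) := by
    intro A hA h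
    rw [phiPath, dif_pos h]
  have phiPath_sub : ∀ A ∈ pathCl, phiPath G (t - 1) A ⊆ A := by
    intro A hA
    obtain ⟨hBG, hBA, hmax, hd⟩ := pmax_basic A hA
    rw [phiPath_eq A hA hd]
    refine insert_subset ?_ ?_
    · exact (mem_sdiff.mp ((A \ pmax G A).min'_mem hd)).1
    · exact (csub_subset (le_trans (Nat.sub_le t 1) (hGcard _ hBG))).trans hBA.subset
  have phiPath_card : ∀ A ∈ pathCl, (phiPath G (t - 1) A).card = t := by
    intro A hA
    obtain ⟨hBG, hBA, hmax, hd⟩ := pmax_basic A hA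
    rw [phiPath_eq A hA hd]
    have hx : (A \ pmax G A).min' hd ∉ csub (t - 1) (pmax G A) := by
      intro hmem
      exact (mem_sdiff.mp ((A \ pmax G A).min'_mem hd)).2
        (csub_subset (le_trans (Nat.sub_le t 1) (hGcard _ hBG)) hmem)
    rw [card_insert_of_notMem hx, csub_card (le_trans (Nat.sub_le t 1) (hGcard _ hBG))]
    omega
  have path_key : ∀ A1 ∈ pathCl, ∀ A2 ∈ pathCl,
      phiPath G (t - 1) A1 = phiPath G (t - 1) A2 → A1 ⊂ A2 → False := by
    intro A1 h1 A2 h2 he hss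
    obtain ⟨hBG2, hBA2, hmax2, hd2⟩ := pmax_basic A2 h2
    have hA1G : A1 ∈ G := mem_filter.mp h1 |>.1
    have hsub : A1 ⊆ pmax G A2 := hmax2 A1 hA1G hss
    have hx2 : (A2 \ pmax G A2).min' hd2 ∈ phiPath G (t - 1) A2 := by
      rw [phiPath_eq A2 h2 hd2]; exact mem_insert_self _ _
    have : (A2 \ pmax G A2).min' hd2 ∈ A1 := phiPath_sub A1 h1 (he ▸ hx2)
    exact (mem_sdiff.mp ((A2 \ pmax G A2).min'_mem hd2)).2 (hsub this)
  have pathBound : pathCl.card ≤ T.card := by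
    refine card_le_card_of_injOn (fun A => phiPath G (t - 1) A) (fun A hA => ?_) ?_
    · exact memT _ (le_of_eq (phiPath_card A hA))
    · intro A1 h1 A2 h2 he
      simp only [coe_mem] at *
      have h1' := h1; have h2' := h2
      rw [mem_coe] at h1' h2'
      have hA1G : A1 ∈ G := (mem_filter.mp h1').1
      have hA2G : A2 ∈ G := (mem_filter.mp h2').1
      have hs1 : phiPath G (t - 1) A1 ⊆ A1 := phiPath_sub A1 h1'
      have hs2 : phiPath G (t - 1) A1 ⊆ A2 := he ▸ phiPath_sub A2 h2'
      have hcard : t ≤ (phiPath G (t - 1) A1).card := le_of_eq (phiPath_card A1 h1').symm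
      rcases nest A1 hA1G A2 hA2G _ hs1 hs2 hcard with h | h
      · rcases eq_or_ne A1 A2 with hh | hh
        · exact hh
        · exact absurd (path_key A1 h1' A2 h2' he (ssubset_of_ne_of_subset hh h)) not_false
      · rcases eq_or_ne A1 A2 with hh | hh
        · exact hh
        · exact absurd (path_key A2 h2' A1 h1' he.symm
            (ssubset_of_ne_of_subset hh.symm h)) not_false
  -- branch class facts
  set branchCl : Finset (Finset (Fin n)) :=
    G.filter (fun A => (¬ ∀ B ∈ G, ¬ B ⊂ A) ∧ ¬ PathP G A) with hbranchCl
  have branch_basic : ∀ A ∈ branchCl,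
      c1 G A ∈ Ch G A ∧ c2 G A ∈ Ch G A ∧ c1 G A ≠ c2 G A := by
    intro A hA
    obtain ⟨hAG, hnl, hnp⟩ := mem_filter.mp hA
    push_neg at hnl
    obtain ⟨B, hBG, hBA⟩ := hnl
    obtain ⟨D0, hD0, -⟩ := ch_cover A B (mem_filter.mpr ⟨hBG, hBA⟩)
    have hc1 : c1 G A ∈ Ch G A := minBy_mem ⟨D0, hD0⟩
    have hc1G := ch_mem A _ hc1
    rw [PathP] at hnp
    push_neg at hnp
    obtain ⟨C, hCG, hCA, hCB⟩ := hnp (c1 G A) hc1G.1 hc1G.2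
    obtain ⟨D, hD, hCD⟩ := ch_cover A C (mem_filter.mpr ⟨hCG, hCA⟩)
    have hDne : D ≠ c1 G A := fun hh => hCB (hh ▸ hCD)
    have herase : (((Ch G A).erase (c1 G A))).Nonempty :=
      ⟨D, mem_erase.mpr ⟨hDne, hD⟩⟩
    have hc2' : c2 G A ∈ (Ch G A).erase (c1 G A) := minBy_mem herase
    exact ⟨hc1, (mem_erase.mp hc2').2, fun hh => (mem_erase.mp hc2').1 hh.symm⟩
  have branch_L : ∀ A ∈ branchCl,
      lmin G (c2 G A) ∈ Lv G ∧ lmin G (c2 G A) ⊆ c2 G A := by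
    intro A hA
    have hc2 := (branch_basic A hA).2.1
    have hc2G := (ch_mem A _ hc2).1
    exact ⟨lmin_lv _ hc2G, lmin_sub _ hc2G⟩
  have branch_key : ∀ A1 ∈ branchCl, ∀ A2 ∈ branchCl,
      lmin G (c2 G A1) = lmin G (c2 G A2) → A1 ⊂ A2 → False := by
    intro A1 h1 A2 h2 he hss
    obtain ⟨hc11, hc21, hne1⟩ := branch_basic A1 h1
    obtain ⟨hc12, hc22, hne2⟩ := branch_basic A2 h2
    have hA1G : A1 ∈ G := (mem_filter.mp h1).1
    set L := lmin G (c2 G A2) with hL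
    have hLlv : L ∈ Lv G := (branch_L A2 h2).1
    have hLG : L ∈ G := lv_mem_G _ hLlv
    have hLc22 : L ⊆ c2 G A2 := (branch_L A2 h2).2
    have hLA1 : L ⊆ A1 := by
      have := (branch_L A1 h1).2
      rw [he] at this
      exact this.trans (ch_mem A1 _ hc21).2.subset
    -- A1 sits inside some child D of A2
    obtain ⟨D, hD, hA1D⟩ := ch_cover A2 A1 (mem_filter.mpr ⟨hA1G, hss⟩)
    have hDeq : D = c2 G A2 := by
      by_contra hDne
      exact ch_nocommon A2 D hD (c2 G A2) hc22 hDne L hLG (hLA1.trans hA1D) hLc22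
    have hA1c22 : A1 ⊆ c2 G A2 := hDeq ▸ hA1D
    -- the smallest leaf of c1 A1 also lies in c2 A2
    have hl1lv : lmin G (c1 G A1) ∈ Lv G := lmin_lv _ (ch_mem A1 _ hc11).1
    have hl1sub : lmin G (c1 G A1) ⊆ c2 G A2 :=
      ((lmin_sub _ (ch_mem A1 _ hc11).1).trans (ch_mem A1 _ hc11).2.subset).trans hA1c22
    have hle1 : enc L ≤ enc (lmin G (c1 G A1)) := lmin_le _ _ hl1lv hl1sub
    have hle2 : enc (lmin G (c1 G A1)) ≤ enc (lmin G (c2 G A1)) := by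
      rw [c1]; exact minBy_le (f := fun D => enc (lmin G D)) hc21
    have hencEq : enc (lmin G (c1 G A1)) = enc L := by
      rw [he] at hle2; omega
    have hLeq : lmin G (c1 G A1) = L := enc_inj hencEq
    have hLc11 : L ⊆ c1 G A1 := hLeq ▸ lmin_sub _ (ch_mem A1 _ hc11).1
    have hLc21 : L ⊆ c2 G A1 := by
      have := (branch_L A1 h1).2
      rw [he] at this; exact this
    exact ch_nocommon A1 (c1 G A1) hc11 (c2 G A1) hc21 hne1 L hLG hLc11 hLc21
  have branchBound : branchCl.card ≤ T.card := by
    refine card_le_card_of_injOn (fun A => csub t (lmin G (c2 G A))) (fun A hA => ?_) ?_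
    · exact memT _ (le_of_eq (csub_card (hGcard _ (lv_mem_G _ (branch_L A hA).1))))
    · intro A1 h1 A2 h2 he
      rw [mem_coe] at h1 h2
      have hLeq : lmin G (c2 G A1) = lmin G (c2 G A2) :=
        leaf_eq _ (branch_L A1 h1).1 _ (branch_L A2 h2).1 he
      have hA1G : A1 ∈ G := (mem_filter.mp h1).1
      have hA2G : A2 ∈ G := (mem_filter.mp h2).1
      have hs1 : lmin G (c2 G A1) ⊆ A1 :=
        (branch_L A1 h1).2.trans (ch_mem A1 _ (branch_basic A1 h1).2.1).2.subset
      have hs2 : lmin G (c2 G A1) ⊆ A2 := by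
        rw [hLeq]
        exact (branch_L A2 h2).2.trans (ch_mem A2 _ (branch_basic A2 h2).2.1).2.subset
      have hcard : t ≤ (lmin G (c2 G A1)).card :=
        hGcard _ (lv_mem_G _ (branch_L A1 h1).1)
      rcases nest A1 hA1G A2 hA2G _ hs1 hs2 hcard with h | h
      · rcases eq_or_ne A1 A2 with hh | hh
        · exact hh
        · exact absurd (branch_key A1 h1 A2 h2 hLeq (ssubset_of_ne_of_subset hh h))
            not_false
      · rcases eq_or_ne A1 A2 with hh | hh
        · exact hh
        · exact absurd (branch_key A2 h2 A1 h1 hLeq.symm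
            (ssubset_of_ne_of_subset hh.symm h)) not_false
  -- small sets bound
  have smallBound : (F.filter (fun A => ¬ t ≤ A.card)).card ≤ T.card := by
    refine card_le_card_of_injOn id (fun A hA => ?_) (fun a _ b _ hh => hh)
    exact memT _ (le_of_lt (lt_of_not_ge (mem_filter.mp hA).2))
  -- partition of G into the three classes
  have hGsplit : G.card ≤ (Lv G).card + pathCl.card + branchCl.card := by
    have h1 : (G.filter (fun A => ∀ B ∈ G, ¬ B ⊂ A)).card +
        (G.filter (fun A => ¬ ∀ B ∈ G, ¬ B ⊂ A)).card = G.card :=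
      card_filter_add_card_filter_not _
    have h2 : ((G.filter (fun A => ¬ ∀ B ∈ G, ¬ B ⊂ A)).filter (fun A => PathP G A)).card +
        ((G.filter (fun A => ¬ ∀ B ∈ G, ¬ B ⊂ A)).filter (fun A => ¬ PathP G A)).card =
        (G.filter (fun A => ¬ ∀ B ∈ G, ¬ B ⊂ A)).card :=
      card_filter_add_card_filter_not _
    have e1 : Lv G = G.filter (fun A => ∀ B ∈ G, ¬ B ⊂ A) := rfl
    have e2 : pathCl =
        (G.filter (fun A => ¬ ∀ B ∈ G, ¬ B ⊂ A)).filter (fun A => PathP G A) := by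
      rw [hpathCl]; ext A; simp [mem_filter, and_assoc]
    have e3 : branchCl =
        (G.filter (fun A => ¬ ∀ B ∈ G, ¬ B ⊂ A)).filter (fun A => ¬ PathP G A) := by
      rw [hbranchCl]; ext A; simp [mem_filter, and_assoc]
    rw [e1, e2, e3]
    omega
  have hFsplit : F.card = G.card + (F.filter (fun A => ¬ t ≤ A.card)).card := by
    rw [hGdef]
    exact (card_filter_add_card_filter_not _).symm
  calc F.card = G.card + (F.filter (fun A => ¬ t ≤ A.card)).card := hFsplit
    _ ≤ ((Lv G).card + pathCl.card + branchCl.card) +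
        (F.filter (fun A => ¬ t ≤ A.card)).card := by omega
    _ ≤ 4 * T.card := by omega
    _ ≤ 4 * ((t + 1) * n ^ t) := by omega
    _ = 4 * (t + 1) * n ^ t := by ring
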